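/- Let X be a complex m×n matrix with singular value decomposition X = U Σ Vᴴ, where Σ = diag(σ_1(X), …, σ_min(m,n)(X)) contains the singular values of X. For α ≥ 0, define S_α(X) := U diag(s_α(σ_1(X)), …, s_α(σ_min(m,n)(X))) Vᴴ, where s_α(x) = sgn(x)·max{|x|−α,0}. Then S_α(X) is a minimizer over all m×n matrices V of the functional V ↦ α‖V‖_* + (1/2)‖X − V‖_F², where ‖V‖_* denotes the nuclear norm of V (the sum of its singular values) and ‖·‖_F the Frobenius norm. -/

import Mathlib

open Matrix

/-- Soft thresholding with parameter `α`: `s_α(x) = sgn(x) · max(|x| - α, 0)`. -/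
noncomputable def softThresh (α x : ℝ) : ℝ := Real.sign x * max (|x| - α) 0

/-- The nuclear norm of a complex `m × n` matrix: the sum of its singular values, i.e. the sum
of the nonnegative square roots of the eigenvalues of `Vᴴ * V`. -/
noncomputable def nuclearNorm {m n : ℕ} (V : Matrix (Fin m) (Fin n) ℂ) : ℝ :=
  ∑ j : Fin n, Real.sqrt ((Matrix.isHermitian_conjTranspose_mul_self V).eigenvalues j)

/-- The squared Frobenius norm of a complex `m × n` matrix. -/
noncomputable def frobNormSq {m n : ℕ} (V : Matrix (Fin m) (Fin n) ℂ) : ℝ :=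
  ∑ i : Fin m, ∑ j : Fin n, ‖V i j‖ ^ 2

/-- The rectangular `m × n` "diagonal" matrix with diagonal entries `f 0, f 1, …`. -/
noncomputable def diagRect (m n : ℕ) (f : ℕ → ℝ) : Matrix (Fin m) (Fin n) ℂ :=
  fun i j => if (i : ℕ) = (j : ℕ) then (f (i : ℕ) : ℂ) else 0

section Aux

set_option maxHeartbeats 1000000

open Finset Polynomial

/-- Real part of the Frobenius inner product. -/
noncomputable def rip {m n : ℕ} (A B : Matrix (Fin m) (Fin n) ℂ) : ℝ :=
  ∑ i : Fin m, ∑ j : Fin n, (star (A i j) * B i j).re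

lemma rip_eq_trace {m n : ℕ} (A B : Matrix (Fin m) (Fin n) ℂ) :
    rip A B = (Matrix.trace (Aᴴ * B)).re := by
  simp only [rip, Matrix.trace, Matrix.diag, Matrix.mul_apply, Matrix.conjTranspose_apply,
    Complex.re_sum]
  rw [Finset.sum_comm]

lemma rip_conj {m n : ℕ} (U : Matrix (Fin m) (Fin m) ℂ) (V : Matrix (Fin n) (Fin n) ℂ)
    (A W : Matrix (Fin m) (Fin n) ℂ) :
    rip (U * A * Vᴴ) W = rip A (Uᴴ * W * V) := by
  rw [rip_eq_trace, rip_eq_trace]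
  congr 1
  rw [conjTranspose_mul, conjTranspose_mul, conjTranspose_conjTranspose]
  rw [show V * (Aᴴ * Uᴴ) * W = V * (Aᴴ * Uᴴ * W) from Matrix.mul_assoc _ _ _,
    Matrix.trace_mul_comm]
  simp only [Matrix.mul_assoc]

lemma rip_conj' {m n : ℕ} (U : Matrix (Fin m) (Fin m) ℂ) (V : Matrix (Fin n) (Fin n) ℂ)
    (hU : U ∈ Matrix.unitaryGroup (Fin m) ℂ) (hV : V ∈ Matrix.unitaryGroup (Fin n) ℂ)
    (A B : Matrix (Fin m) (Fin n) ℂ) :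
    rip (U * A * Vᴴ) (U * B * Vᴴ) = rip A B := by
  rw [rip_conj U V]
  have hU' : Uᴴ * U = 1 := by
    rw [← Matrix.star_eq_conjTranspose]; exact Matrix.mem_unitaryGroup_iff'.mp hU
  have hV' : Vᴴ * V = 1 := by
    rw [← Matrix.star_eq_conjTranspose]; exact Matrix.mem_unitaryGroup_iff'.mp hV
  congr 1
  calc Uᴴ * (U * B * Vᴴ) * V = (Uᴴ * U) * B * (Vᴴ * V) := by
        simp only [Matrix.mul_assoc]
      _ = B := by rw [hU', hV', Matrix.one_mul, Matrix.mul_one]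

lemma rip_sub_right {m n : ℕ} (A B C : Matrix (Fin m) (Fin n) ℂ) :
    rip A (B - C) = rip A B - rip A C := by
  simp only [rip, Matrix.sub_apply, mul_sub, Complex.sub_re, Finset.sum_sub_distrib]

lemma frob_nonneg {m n : ℕ} (A : Matrix (Fin m) (Fin n) ℂ) : 0 ≤ frobNormSq A := by
  refine Finset.sum_nonneg fun i _ => Finset.sum_nonneg fun j _ => by positivity

lemma frob_add {m n : ℕ} (A B : Matrix (Fin m) (Fin n) ℂ) :
    frobNormSq (A + B) = frobNormSq A + 2 * rip A B + frobNormSq B := by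
  have key : ∀ p q : ℂ, ‖p + q‖ ^ 2
      = ‖p‖ ^ 2 + 2 * (star p * q).re + ‖q‖ ^ 2 := by
    intro p q
    simp only [Complex.sq_norm, Complex.normSq_apply, Complex.add_re, Complex.add_im,
      Complex.mul_re, RCLike.star_def, Complex.conj_re, Complex.conj_im]
    try ring
  simp only [frobNormSq, rip, Matrix.add_apply, key, Finset.sum_add_distrib, Finset.mul_sum]



lemma sum_dite_lt (m n : ℕ) (φ : ℕ → ℝ) :
    (∑ i : Fin m, if (i : ℕ) < n then φ (i : ℕ) else 0) = ∑ k ∈ Finset.range (min m n), φ k := by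
  rw [Fin.sum_univ_eq_sum_range (fun k => if k < n then φ k else 0) m, ← Finset.sum_filter]
  congr 1
  ext k
  simp [Nat.lt_min, and_comm]

lemma sum_dite_le {m n : ℕ} (ψ : Fin n → ℝ) (hψ : ∀ j, 0 ≤ ψ j) :
    (∑ i : Fin m, if h : (i : ℕ) < n then ψ ⟨i, h⟩ else 0) ≤ ∑ j : Fin n, ψ j := by
  let ψ' : ℕ → ℝ := fun k => if hk : k < n then ψ ⟨k, hk⟩ else 0
  have hval : ∀ k (hk : k < n), ψ' k = ψ ⟨k, hk⟩ := fun k hk => dif_pos hk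
  have h1 : (∑ i : Fin m, if h : (i : ℕ) < n then ψ ⟨i, h⟩ else 0)
      = ∑ i : Fin m, if (i : ℕ) < n then ψ' (i : ℕ) else 0 := by
    refine Finset.sum_congr rfl fun i _ => ?_
    by_cases h : (i : ℕ) < n
    · rw [dif_pos h, if_pos h, hval _ h]
    · rw [dif_neg h, if_neg h]
  have h2 : (∑ j : Fin n, if (j : ℕ) < m then ψ' (j : ℕ) else 0)
      = ∑ k ∈ Finset.range (min n m), ψ' k := sum_dite_lt n m ψ'
  rw [h1, sum_dite_lt m n ψ', show min m n = min n m from Nat.min_comm m n, ← h2]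
  refine Finset.sum_le_sum fun j _ => ?_
  by_cases h : (j : ℕ) < m
  · rw [if_pos h, hval _ j.isLt, Fin.eta]
  · rw [if_neg h]; exact hψ j

lemma rip_diagRect_left {m n : ℕ} (g : ℕ → ℝ) (M : Matrix (Fin m) (Fin n) ℂ) :
    rip (diagRect m n g) M
      = ∑ i : Fin m, if h : (i : ℕ) < n then g (i : ℕ) * (M i ⟨(i : ℕ), h⟩).re else 0 := by
  unfold rip diagRect
  refine Finset.sum_congr rfl fun i _ => ?_
  by_cases h : (i : ℕ) < n
  · rw [dif_pos h]
    rw [Finset.sum_eq_single_of_mem (⟨(i : ℕ), h⟩ : Fin n) (Finset.mem_univ _)]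
    · rw [if_pos rfl, RCLike.star_def, Complex.conj_ofReal, Complex.re_ofReal_mul]
    · intro j _ hj
      rw [if_neg, star_zero, zero_mul, Complex.zero_re]
      intro hij
      exact hj (by ext; exact hij.symm)
  · rw [dif_neg h]
    refine Finset.sum_eq_zero fun j _ => ?_
    rw [if_neg, star_zero, zero_mul, Complex.zero_re]
    intro hij
    exact h (hij ▸ j.isLt)

lemma charpoly_conj_eq {n : ℕ} {R : Type*} [CommRing R] (P Q M : Matrix (Fin n) (Fin n) R)
    (hPQ : P * Q = 1) (hQP : Q * P = 1) : (P * M * Q).charpoly = M.charpoly := by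
  let mp := (RingHom.mapMatrix (C : R →+* R[X]) : Matrix (Fin n) (Fin n) R →+*
    Matrix (Fin n) (Fin n) R[X])
  have hc : charmatrix (P * M * Q) = mp P * charmatrix M * mp Q := by
    rw [charmatrix, charmatrix, mul_sub, sub_mul]
    congr 1
    · rw [mul_assoc, (Matrix.scalar_commute (X : R[X]) (fun r => Commute.all _ _) (mp Q)).eq,
        ← mul_assoc, ← _root_.map_mul, hPQ, _root_.map_one, one_mul]
    · simp only [mp, _root_.map_mul]
  have hdet : (mp P).det * (mp Q).det = 1 := by
    rw [← det_mul, ← _root_.map_mul, hPQ, _root_.map_one, det_one]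
  rw [Matrix.charpoly, Matrix.charpoly, hc, det_mul, det_mul,
    show (mp P).det * M.charmatrix.det * (mp Q).det
      = (mp P).det * (mp Q).det * M.charmatrix.det by ring, hdet, one_mul]

lemma charpoly_diag {n : ℕ} {R : Type*} [CommRing R] (d : Fin n → R) :
    (Matrix.diagonal d).charpoly = ∏ i : Fin n, (X - C (d i)) := by
  rw [Matrix.charpoly_of_upperTriangular _ (Matrix.blockTriangular_diagonal d)]
  simp

/-- If a Hermitian matrix is conjugate (by a unitary) to a diagonal matrix `diagonal d`, then
the multiset of its eigenvalues equals the multiset of the `d i`. -/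
lemma eigenvalues_multiset_eq {n : ℕ} {A : Matrix (Fin n) (Fin n) ℂ} (hA : A.IsHermitian)
    (V : Matrix (Fin n) (Fin n) ℂ) (hV : V ∈ Matrix.unitaryGroup (Fin n) ℂ)
    (d : Fin n → ℂ) (hAd : A = V * Matrix.diagonal d * Vᴴ) :
    Multiset.map d Finset.univ.val
      = Multiset.map (fun i => (hA.eigenvalues i : ℂ)) Finset.univ.val := by
  have hV1 : V * Vᴴ = 1 := by
    rw [← Matrix.star_eq_conjTranspose]; exact Matrix.mem_unitaryGroup_iff.mp hV
  have hV2 : Vᴴ * V = 1 := by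
    rw [← Matrix.star_eq_conjTranspose]; exact Matrix.mem_unitaryGroup_iff'.mp hV
  have h1 : A.charpoly = ∏ i : Fin n, (X - C (d i)) := by
    rw [hAd, charpoly_conj_eq _ _ _ hV1 hV2, charpoly_diag]
  have h2 : A.charpoly = ∏ i : Fin n, (X - C ((hA.eigenvalues i : ℂ))) := by
    set Q : Matrix (Fin n) (Fin n) ℂ := (hA.eigenvectorUnitary : Matrix (Fin n) (Fin n) ℂ)
    have hQ1 : Q * star Q = 1 := Matrix.mem_unitaryGroup_iff.mp hA.eigenvectorUnitary.2
    have hQ2 : star Q * Q = 1 := Matrix.mem_unitaryGroup_iff'.mp hA.eigenvectorUnitary.2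
    conv_lhs => rw [hA.spectral_theorem, Unitary.conjStarAlgAut_apply]
    rw [charpoly_conj_eq _ _ _ hQ1 hQ2, charpoly_diag]
    rfl
  have h3 : ∏ i : Fin n, (X - C (d i)) = ∏ i : Fin n, (X - C ((hA.eigenvalues i : ℂ))) :=
    h1 ▸ h2
  have h4 := congrArg Polynomial.roots h3
  rw [Finset.prod_eq_multiset_prod, Finset.prod_eq_multiset_prod] at h4
  have h5 : (Multiset.map (fun i => X - C (d i)) Finset.univ.val)
      = (Multiset.map d Finset.univ.val).map (fun a => X - C a) := by
    rw [Multiset.map_map]; rfl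
  have h6 : (Multiset.map (fun i => X - C ((hA.eigenvalues i : ℂ))) Finset.univ.val)
      = (Multiset.map (fun i => (hA.eigenvalues i : ℂ)) Finset.univ.val).map
          (fun a => X - C a) := by
    rw [Multiset.map_map]; rfl
  rwa [h5, h6, Polynomial.roots_multiset_prod_X_sub_C,
    Polynomial.roots_multiset_prod_X_sub_C] at h4

lemma diagRect_conjTranspose_mul_self {m n : ℕ} (s' : ℕ → ℝ)
    (hz : ∀ k, min m n ≤ k → s' k = 0) :
    (diagRect m n s')ᴴ * diagRect m n s'
      = Matrix.diagonal (fun j : Fin n => ((s' (j : ℕ) ^ 2 : ℝ) : ℂ)) := by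
  ext j k
  rw [Matrix.mul_apply]
  by_cases hjk : j = k
  · subst hjk
    rw [Matrix.diagonal_apply_eq]
    by_cases hjm : (j : ℕ) < m
    · rw [Finset.sum_eq_single_of_mem (⟨(j : ℕ), hjm⟩ : Fin m) (Finset.mem_univ _)]
      · simp [diagRect, ← Complex.ofReal_mul, sq, Complex.conj_ofReal]
      · intro i _ hi
        have : ¬((i : ℕ) = (j : ℕ)) := fun hij => hi (by ext; exact hij)
        simp [diagRect, Matrix.conjTranspose_apply, this]
    · have hs : s' (j : ℕ) = 0 := hz _ (le_trans (min_le_left m n) (not_lt.mp hjm))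
      rw [hs]
      norm_num
      refine Finset.sum_eq_zero fun i _ => ?_
      have : ¬((i : ℕ) = (j : ℕ)) := fun hij => hjm (hij ▸ i.isLt)
      simp [diagRect, Matrix.conjTranspose_apply, this]
  · rw [Matrix.diagonal_apply_ne _ hjk]
    refine Finset.sum_eq_zero fun i _ => ?_
    have : ¬((i : ℕ) = (j : ℕ)) ∨ ¬((i : ℕ) = (k : ℕ)) := by
      by_contra hc
      push_neg at hc
      exact hjk (by ext; rw [← hc.1, hc.2])
    rcases this with h | h <;> simp [diagRect, Matrix.conjTranspose_apply, h]

lemma nuclearNorm_conj_diagRect {m n : ℕ}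
    (U : Matrix (Fin m) (Fin m) ℂ) (V : Matrix (Fin n) (Fin n) ℂ)
    (hU : U ∈ Matrix.unitaryGroup (Fin m) ℂ) (hV : V ∈ Matrix.unitaryGroup (Fin n) ℂ)
    (s' : ℕ → ℝ) (h0 : ∀ k, 0 ≤ s' k) (hz : ∀ k, min m n ≤ k → s' k = 0) :
    nuclearNorm (U * diagRect m n s' * Vᴴ) = ∑ k ∈ Finset.range (min m n), s' k := by
  set Y := U * diagRect m n s' * Vᴴ with hYdef
  have hY := Matrix.isHermitian_conjTranspose_mul_self Y
  have hU' : Uᴴ * U = 1 := by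
    rw [← Matrix.star_eq_conjTranspose]; exact Matrix.mem_unitaryGroup_iff'.mp hU
  have step1 : Yᴴ * Y = V * Matrix.diagonal (fun j : Fin n => ((s' (j : ℕ) ^ 2 : ℝ) : ℂ)) * Vᴴ := by
    rw [hYdef, Matrix.conjTranspose_mul, Matrix.conjTranspose_mul,
      Matrix.conjTranspose_conjTranspose, ← diagRect_conjTranspose_mul_self s' hz]
    calc V * ((diagRect m n s')ᴴ * Uᴴ) * (U * diagRect m n s' * Vᴴ)
        = V * ((diagRect m n s')ᴴ * (Uᴴ * U) * diagRect m n s') * Vᴴ := by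
          simp only [Matrix.mul_assoc]
      _ = V * ((diagRect m n s')ᴴ * diagRect m n s') * Vᴴ := by
          rw [hU', Matrix.mul_one]
  have hmult := eigenvalues_multiset_eq hY V hV _ step1
  have key : ∀ (g : Fin n → ℂ),
      ((Finset.univ.val.map g).map (fun z : ℂ => Real.sqrt z.re)).sum
        = ∑ j : Fin n, Real.sqrt ((g j).re) := by
    intro g
    rw [Multiset.map_map]
    rfl
  have h7 := congrArg (fun M : Multiset ℂ => (M.map (fun z : ℂ => Real.sqrt z.re)).sum) hmult
  simp only [key] at h7
  have h7' : ∑ j : Fin n, s' (j : ℕ) = ∑ j : Fin n, Real.sqrt (hY.eigenvalues j) := by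
    calc ∑ j : Fin n, s' (j : ℕ)
        = ∑ j : Fin n, Real.sqrt (((s' (j : ℕ) ^ 2 : ℝ) : ℂ)).re := by
          refine Finset.sum_congr rfl fun j _ => ?_
          rw [Complex.ofReal_re, Real.sqrt_sq (h0 _)]
      _ = ∑ j : Fin n, Real.sqrt (((hY.eigenvalues j : ℝ) : ℂ)).re := h7
      _ = ∑ j : Fin n, Real.sqrt (hY.eigenvalues j) := by
          refine Finset.sum_congr rfl fun j _ => by rw [Complex.ofReal_re]
  have h8 : nuclearNorm Y = ∑ j : Fin n, s' (j : ℕ) := h7'.symm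
  rw [h8, Fin.sum_univ_eq_sum_range (fun k => s' k) n]
  rw [Finset.sum_subset (Finset.range_subset_range.mpr (min_le_right m n))]
  intro x hx hnx
  exact hz x (by simp only [Finset.mem_range] at hx hnx ⊢; omega)

lemma diag_abs_le_nuclearNorm {m n : ℕ}
    (U : Matrix (Fin m) (Fin m) ℂ) (V : Matrix (Fin n) (Fin n) ℂ)
    (hU : U ∈ Matrix.unitaryGroup (Fin m) ℂ) (hV : V ∈ Matrix.unitaryGroup (Fin n) ℂ)
    (W : Matrix (Fin m) (Fin n) ℂ) :
    (∑ i : Fin m, if h : (i : ℕ) < n then ‖(Uᴴ * W * V) i ⟨(i : ℕ), h⟩‖ else 0)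
      ≤ nuclearNorm W := by
  have hW := Matrix.isHermitian_conjTranspose_mul_self W
  set Q : Matrix (Fin n) (Fin n) ℂ := (hW.eigenvectorUnitary : Matrix (Fin n) (Fin n) ℂ) with hQdef
  have hQ1 : Q * Qᴴ = 1 := by
    rw [← Matrix.star_eq_conjTranspose]; exact Matrix.mem_unitaryGroup_iff.mp hW.eigenvectorUnitary.2
  have hQ2 : Qᴴ * Q = 1 := by
    rw [← Matrix.star_eq_conjTranspose]; exact Matrix.mem_unitaryGroup_iff'.mp hW.eigenvectorUnitary.2
  have hU1 : U * Uᴴ = 1 := by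
    rw [← Matrix.star_eq_conjTranspose]; exact Matrix.mem_unitaryGroup_iff.mp hU
  have hV1 : V * Vᴴ = 1 := by
    rw [← Matrix.star_eq_conjTranspose]; exact Matrix.mem_unitaryGroup_iff.mp hV
  set B : Matrix (Fin m) (Fin n) ℂ := Uᴴ * W * Q with hBdef
  set Cm : Matrix (Fin n) (Fin n) ℂ := Qᴴ * V with hCdef
  have hM : Uᴴ * W * V = B * Cm := by
    rw [hBdef, hCdef]
    calc Uᴴ * W * V = Uᴴ * W * (Q * Qᴴ) * V := by rw [hQ1, Matrix.mul_one]
      _ = Uᴴ * W * Q * (Qᴴ * V) := by simp only [Matrix.mul_assoc]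
  -- column norms of B
  have hBB : Bᴴ * B = Matrix.diagonal (fun j : Fin n => (hW.eigenvalues j : ℂ)) := by
    have := hW.conjStarAlgAut_star_eigenvectorUnitary
    rw [Unitary.conjStarAlgAut_apply, Unitary.coe_star, star_star, Matrix.star_eq_conjTranspose] at this
    rw [hBdef, Matrix.conjTranspose_mul, Matrix.conjTranspose_mul,
      Matrix.conjTranspose_conjTranspose]
    calc Qᴴ * (Wᴴ * U) * (Uᴴ * W * Q)
        = Qᴴ * (Wᴴ * (U * Uᴴ) * W) * Q := by simp only [Matrix.mul_assoc]
      _ = Qᴴ * (Wᴴ * W) * Q := by rw [hU1, Matrix.mul_one]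
      _ = Matrix.diagonal (fun j : Fin n => (hW.eigenvalues j : ℂ)) := by
          rw [this]; rfl
  have hBcol : ∀ k : Fin n, (∑ i : Fin m, ‖B i k‖ ^ 2) = hW.eigenvalues k := by
    intro k
    have h1 : (Bᴴ * B) k k = (hW.eigenvalues k : ℂ) := by rw [hBB, Matrix.diagonal_apply_eq]
    have h2 : (Bᴴ * B) k k = ∑ i : Fin m, star (B i k) * B i k := by
      rw [Matrix.mul_apply]; rfl
    have := congrArg Complex.re (h2.symm.trans h1)
    rw [Complex.re_sum, Complex.ofReal_re] at this
    rw [← this]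
    refine Finset.sum_congr rfl fun i _ => ?_
    simp [Complex.sq_norm, Complex.normSq_apply, Complex.mul_re, Complex.conj_re,
      Complex.conj_im, RCLike.star_def]
  have hCrow : ∀ k : Fin n, (∑ j : Fin n, ‖Cm k j‖ ^ 2) = 1 := by
    intro k
    have hCC : Cm * Cmᴴ = 1 := by
      rw [hCdef, Matrix.conjTranspose_mul, Matrix.conjTranspose_conjTranspose]
      calc Qᴴ * V * (Vᴴ * Q) = Qᴴ * (V * Vᴴ) * Q := by simp only [Matrix.mul_assoc]
        _ = 1 := by rw [hV1, Matrix.mul_one, hQ2]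
    have h1 : (Cm * Cmᴴ) k k = 1 := by rw [hCC, Matrix.one_apply_eq]
    have h2 : (Cm * Cmᴴ) k k = ∑ j : Fin n, Cm k j * star (Cm k j) := by
      rw [Matrix.mul_apply]; rfl
    have := congrArg Complex.re (h2.symm.trans h1)
    rw [Complex.re_sum, Complex.one_re] at this
    rw [← this]
    refine Finset.sum_congr rfl fun j _ => ?_
    simp [Complex.sq_norm, Complex.normSq_apply, Complex.mul_re, Complex.conj_re,
      Complex.conj_im, RCLike.star_def]
  have hlam : ∀ k : Fin n, 0 ≤ hW.eigenvalues k := fun k =>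
    Matrix.eigenvalues_conjTranspose_mul_self_nonneg W k
  calc (∑ i : Fin m, if h : (i : ℕ) < n then ‖(Uᴴ * W * V) i ⟨(i : ℕ), h⟩‖ else 0)
      ≤ ∑ i : Fin m, ∑ k : Fin n,
          (if h : (i : ℕ) < n then ‖B i k‖ * ‖Cm k ⟨(i : ℕ), h⟩‖ else 0) := by
        refine Finset.sum_le_sum fun i _ => ?_
        by_cases h : (i : ℕ) < n
        · rw [dif_pos h]
          simp only [dif_pos h]
          rw [hM, Matrix.mul_apply]
          refine le_trans (norm_sum_le _ _) ?_
          refine Finset.sum_le_sum fun k _ => ?_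
          exact (norm_mul _ _).le
        · simp only [dif_neg h, le_refl]
          exact le_of_eq (Finset.sum_eq_zero fun k _ => rfl).symm
    _ = ∑ k : Fin n, ∑ i : Fin m,
          (if h : (i : ℕ) < n then ‖B i k‖ * ‖Cm k ⟨(i : ℕ), h⟩‖ else 0) :=
        Finset.sum_comm
    _ ≤ ∑ k : Fin n, Real.sqrt (hW.eigenvalues k) := by
        refine Finset.sum_le_sum fun k _ => ?_
        have step : (∑ i : Fin m,
            (if h : (i : ℕ) < n then ‖B i k‖ * ‖Cm k ⟨(i : ℕ), h⟩‖ else 0))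
            = ∑ i : Fin m, ‖B i k‖ *
                (if h : (i : ℕ) < n then ‖Cm k ⟨(i : ℕ), h⟩‖ else 0) := by
          refine Finset.sum_congr rfl fun i _ => ?_
          by_cases h : (i : ℕ) < n
          · rw [dif_pos h, dif_pos h]
          · rw [dif_neg h, dif_neg h, mul_zero]
        rw [step]
        refine le_trans (Real.sum_mul_le_sqrt_mul_sqrt _ _ _) ?_
        have e1 : (∑ i : Fin m, ‖B i k‖ ^ 2) = hW.eigenvalues k := hBcol k
        have e2 : (∑ i : Fin m,
            (if h : (i : ℕ) < n then ‖Cm k ⟨(i : ℕ), h⟩‖ else 0) ^ 2) ≤ 1 := by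
          have : (∑ i : Fin m,
              (if h : (i : ℕ) < n then ‖Cm k ⟨(i : ℕ), h⟩‖ else 0) ^ 2)
              = ∑ i : Fin m,
                (if h : (i : ℕ) < n then ‖Cm k ⟨(i : ℕ), h⟩‖ ^ 2 else 0) := by
            refine Finset.sum_congr rfl fun i _ => ?_
            by_cases h : (i : ℕ) < n
            · rw [dif_pos h, dif_pos h]
            · rw [dif_neg h, dif_neg h]; norm_num
          rw [this, ← hCrow k]
          exact sum_dite_le (fun j => ‖Cm k j‖ ^ 2) (fun j => sq_nonneg _)
        rw [e1]
        calc Real.sqrt (hW.eigenvalues k) * Real.sqrt (∑ i : Fin m,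
              (if h : (i : ℕ) < n then ‖Cm k ⟨(i : ℕ), h⟩‖ else 0) ^ 2)
            ≤ Real.sqrt (hW.eigenvalues k) * Real.sqrt 1 := by
              refine mul_le_mul_of_nonneg_left (Real.sqrt_le_sqrt e2) (Real.sqrt_nonneg _)
          _ = Real.sqrt (hW.eigenvalues k) := by rw [Real.sqrt_one, mul_one]
    _ = nuclearNorm W := rfl

lemma rip_le_nuclearNorm {m n : ℕ} (α : ℝ)
    (U : Matrix (Fin m) (Fin m) ℂ) (V : Matrix (Fin n) (Fin n) ℂ)
    (hU : U ∈ Matrix.unitaryGroup (Fin m) ℂ) (hV : V ∈ Matrix.unitaryGroup (Fin n) ℂ)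
    (g : ℕ → ℝ) (hg0 : ∀ k, 0 ≤ g k) (hgα : ∀ k, g k ≤ α)
    (W : Matrix (Fin m) (Fin n) ℂ) :
    rip (U * diagRect m n g * Vᴴ) W ≤ α * nuclearNorm W := by
  have hα : 0 ≤ α := le_trans (hg0 0) (hgα 0)
  rw [rip_conj U V, rip_diagRect_left]
  set M := Uᴴ * W * V with hMdef
  calc (∑ i : Fin m, if h : (i : ℕ) < n then g (i : ℕ) * (M i ⟨(i : ℕ), h⟩).re else 0)
      ≤ ∑ i : Fin m, α * (if h : (i : ℕ) < n then ‖M i ⟨(i : ℕ), h⟩‖ else 0) := by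
        refine Finset.sum_le_sum fun i _ => ?_
        by_cases h : (i : ℕ) < n
        · rw [dif_pos h, dif_pos h]
          calc g (i : ℕ) * (M i ⟨(i : ℕ), h⟩).re
              ≤ g (i : ℕ) * ‖M i ⟨(i : ℕ), h⟩‖ :=
                mul_le_mul_of_nonneg_left (Complex.re_le_norm _) (hg0 _)
            _ ≤ α * ‖M i ⟨(i : ℕ), h⟩‖ :=
                mul_le_mul_of_nonneg_right (hgα _) (norm_nonneg _)
        · rw [dif_neg h, dif_neg h, mul_zero]
    _ = α * ∑ i : Fin m, (if h : (i : ℕ) < n then ‖M i ⟨(i : ℕ), h⟩‖ else 0) := by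
        rw [Finset.mul_sum]
    _ ≤ α * nuclearNorm W :=
        mul_le_mul_of_nonneg_left (diag_abs_le_nuclearNorm U V hU hV W) hα

end Aux

/-- **Soft thresholding of singular values solves the nuclear-norm proximity problem.**
If `X = U Σ Vᴴ` is a singular value decomposition of `X` (with `σ` the nonincreasing
singular values of `X`), then `S_α(X) = U diag(s_α(σ_i)) Vᴴ` minimizes
`V ↦ α‖V‖_* + (1/2)‖X - V‖_F²`. -/
theorem matrix_softThresh_prox (m n : ℕ) (α : ℝ) (hα : 0 ≤ α)
    (X : Matrix (Fin m) (Fin n) ℂ)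
    (U : Matrix (Fin m) (Fin m) ℂ) (V : Matrix (Fin n) (Fin n) ℂ)
    (hU : U ∈ Matrix.unitaryGroup (Fin m) ℂ) (hV : V ∈ Matrix.unitaryGroup (Fin n) ℂ)
    (σ : Fin (min m n) → ℝ) (hσanti : Antitone σ) (hσ0 : ∀ i, 0 ≤ σ i)
    (f : ℕ → ℝ) (hf : ∀ k : ℕ, f k = if h : k < min m n then σ ⟨k, h⟩ else 0)
    (hsing : ∃ e : Equiv.Perm (Fin n), ∀ j : Fin n,
      f (j : ℕ) = Real.sqrt ((Matrix.isHermitian_conjTranspose_mul_self X).eigenvalues (e j)))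
    (hSVD : X = U * diagRect m n f * Vᴴ) :
    ∀ W : Matrix (Fin m) (Fin n) ℂ,
      α * nuclearNorm (U * diagRect m n (fun k => softThresh α (f k)) * Vᴴ)
          + (1/2) * frobNormSq (X - U * diagRect m n (fun k => softThresh α (f k)) * Vᴴ)
        ≤ α * nuclearNorm W + (1/2) * frobNormSq (X - W) := by
  intro W
  set s' : ℕ → ℝ := fun k => softThresh α (f k) with hs'def
  set g : ℕ → ℝ := fun k => f k - s' k with hgdef
  have hf0 : ∀ k, 0 ≤ f k := by
    intro k
    rw [hf k]
    split
    · exact hσ0 _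
    · exact le_refl 0
  have hfz : ∀ k, min m n ≤ k → f k = 0 := by
    intro k hk
    rw [hf k, dif_neg (not_lt.mpr hk)]
  have hs'_eq : ∀ k, s' k = max (f k - α) 0 := by
    intro k
    rw [hs'def]
    simp only
    unfold softThresh
    rcases lt_or_eq_of_le (hf0 k) with h | h
    · rw [Real.sign_of_pos h, abs_of_pos h, one_mul]
    · rw [← h, Real.sign_zero, zero_mul, zero_sub, max_eq_right (by linarith)]
  have hs'0 : ∀ k, 0 ≤ s' k := fun k => by rw [hs'_eq]; exact le_max_right _ _
  have hs'z : ∀ k, min m n ≤ k → s' k = 0 := by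
    intro k hk
    rw [hs'_eq, hfz k hk, zero_sub, max_eq_right (by linarith)]
  have hg0 : ∀ k, 0 ≤ g k := by
    intro k
    rw [hgdef]
    simp only
    rw [hs'_eq]
    rcases le_total (f k) α with h | h
    · rw [max_eq_right (by linarith)]; linarith [hf0 k]
    · rw [max_eq_left (by linarith)]; linarith
  have hgα : ∀ k, g k ≤ α := by
    intro k
    rw [hgdef]
    simp only
    rw [hs'_eq]
    rcases le_total (f k) α with h | h
    · rw [max_eq_right (by linarith)]; linarith
    · rw [max_eq_left (by linarith)]; linarith
  have hgs : ∀ k, g k * s' k = α * s' k := by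
    intro k
    rcases le_total (f k) α with h | h
    · have : s' k = 0 := by rw [hs'_eq, max_eq_right (by linarith)]
      rw [this, mul_zero, mul_zero]
    · have hg : g k = α := by
        rw [hgdef]; simp only; rw [hs'_eq, max_eq_left (by linarith)]; ring
      rw [hg]
  set Y : Matrix (Fin m) (Fin n) ℂ := U * diagRect m n s' * Vᴴ with hYdef
  have hDsub : diagRect m n f - diagRect m n s' = diagRect m n g := by
    ext i j
    unfold diagRect
    change (if (i : ℕ) = (j : ℕ) then (f i : ℂ) else 0) - (if (i : ℕ) = (j : ℕ) then (s' i : ℂ) else 0) = _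
    split
    · rw [hgdef]; push_cast; ring
    · rw [sub_zero]
  have hP : X - Y = U * diagRect m n g * Vᴴ := by
    rw [hSVD, hYdef, ← hDsub, Matrix.mul_sub, Matrix.sub_mul]
  -- rip (X - Y) Y
  have hDs_entry : ∀ (i : Fin m) (h : (i : ℕ) < n),
      ((diagRect m n s' : Matrix (Fin m) (Fin n) ℂ) i ⟨(i : ℕ), h⟩).re = s' (i : ℕ) := by
    intro i h
    unfold diagRect
    rw [if_pos rfl, Complex.ofReal_re]
  have hripPY : rip (X - Y) Y = α * ∑ k ∈ Finset.range (min m n), s' k := by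
    rw [hP, hYdef, rip_conj' U V hU hV, rip_diagRect_left]
    have : (∑ i : Fin m, if h : (i : ℕ) < n
          then g (i : ℕ) * ((diagRect m n s' : Matrix (Fin m) (Fin n) ℂ) i ⟨(i : ℕ), h⟩).re else 0)
        = ∑ i : Fin m, if (i : ℕ) < n then g (i : ℕ) * s' (i : ℕ) else 0 := by
      refine Finset.sum_congr rfl fun i _ => ?_
      by_cases h : (i : ℕ) < n
      · rw [dif_pos h, if_pos h, hDs_entry i h]
      · rw [dif_neg h, if_neg h]
    rw [this, sum_dite_lt m n (fun k => g k * s' k), Finset.mul_sum]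
    refine Finset.sum_congr rfl fun k _ => hgs k
  have hnucY : nuclearNorm Y = ∑ k ∈ Finset.range (min m n), s' k :=
    nuclearNorm_conj_diagRect U V hU hV s' hs'0 hs'z
  have hripPW : rip (X - Y) W ≤ α * nuclearNorm W := by
    rw [hP]
    exact rip_le_nuclearNorm α U V hU hV g hg0 hgα W
  have hfrob : frobNormSq (X - W)
      = frobNormSq (X - Y) + 2 * rip (X - Y) (Y - W) + frobNormSq (Y - W) := by
    rw [show X - W = (X - Y) + (Y - W) from (sub_add_sub_cancel X Y W).symm]
    exact frob_add _ _
  have hsplit : rip (X - Y) (Y - W) = rip (X - Y) Y - rip (X - Y) W := rip_sub_right _ _ _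
  have hfrobYW : 0 ≤ frobNormSq (Y - W) := frob_nonneg _
  rw [hfrob, hsplit, hripPY, hnucY]
  linarith [hripPW, hfrobYW]
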